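/- arXiv:2010.05827 — 5 statements merged into one kernel-verified Lean document; each statement's English description precedes it below -/
import Mathlib

section
/- Let N ≥ 2 and let p_1, …, p_{N−1} be integers. There exist an integer k and an N×N antisymmetric integer matrix M with nonnegative upper entries such that p_j = k·δ_{j,1} + k·δ_{j,N−1} − Δp_j for all 1 ≤ j ≤ N−1 if and only if N divides ∑_{j=1}^{N−1} j·p_j. -/
/-- For `N ≥ 2` and integers `p 1, …, p (N-1)`, there exist an
integer `k` and an `N × N` antisymmetric integer matrix `M` with nonnegative
upper entries such that `p j = k·δ_{j,1} + k·δ_{j,N-1} - Δp j` for all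
`1 ≤ j ≤ N-1` (where `Δp j = m j - m (j+1)` and `m j` is the `j`-th row sum of
`M`) if and only if `N` divides `∑_{j=1}^{N-1} j · p j`. -/
theorem stmt_3 (N : ℕ) (hN : 2 ≤ N) (p : ℕ → ℤ) :
    (∃ (k : ℤ) (M : ℕ → ℕ → ℤ),
      (∀ j ∈ Finset.Icc 1 N, ∀ l ∈ Finset.Icc 1 N, M j l = - M l j) ∧
      (∀ j ∈ Finset.Icc 1 N, ∀ l ∈ Finset.Icc 1 N, j < l → 0 ≤ M j l) ∧
      (∀ j ∈ Finset.Icc 1 (N - 1),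
        p j = (if j = 1 then k else 0) + (if j = N - 1 then k else 0)
          - ((∑ l ∈ Finset.Icc 1 N, M j l) - (∑ l ∈ Finset.Icc 1 N, M (j + 1) l)))) ↔
    (N : ℤ) ∣ ∑ j ∈ Finset.Icc 1 (N - 1), (j : ℤ) * p j := by
  obtain ⟨n, rfl⟩ : ∃ n, N = n + 2 := ⟨N - 2, by omega⟩
  simp only [show n + 2 - 1 = n + 1 from rfl]
  have abel : ∀ (g : ℕ → ℤ) (t : ℕ),
      ∑ j ∈ Finset.Icc 1 t, (j:ℤ) * (g j - g (j+1)) = (∑ j ∈ Finset.Icc 1 t, g j) - t * g (t+1) := by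
    intro g t
    induction t with
    | zero => simp
    | succ t ih =>
        rw [Finset.sum_Icc_succ_top (by omega : 1 ≤ t+1),
          Finset.sum_Icc_succ_top (by omega : 1 ≤ t+1), ih]
        push_cast; ring
  constructor
  · rintro ⟨k, M, hanti, -, hp⟩
    set m : ℕ → ℤ := fun j => ∑ l ∈ Finset.Icc 1 (n+2), M j l with hm
    have hm0 : ∑ j ∈ Finset.Icc 1 (n+2), m j = 0 := by
      have h1 : ∑ j ∈ Finset.Icc 1 (n+2), m j
          = - ∑ j ∈ Finset.Icc 1 (n+2), m j := by
        calc ∑ j ∈ Finset.Icc 1 (n+2), m j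
            = ∑ j ∈ Finset.Icc 1 (n+2), ∑ l ∈ Finset.Icc 1 (n+2), M l j := Finset.sum_comm
          _ = ∑ j ∈ Finset.Icc 1 (n+2), ∑ l ∈ Finset.Icc 1 (n+2), -(M j l) := by
              refine Finset.sum_congr rfl fun j hj => Finset.sum_congr rfl fun l hl => ?_
              exact hanti l hl j hj
          _ = - ∑ j ∈ Finset.Icc 1 (n+2), m j := by
              simp [hm, Finset.sum_neg_distrib]
      linarith
    have e1 : ∀ j ∈ Finset.Icc 1 (n+1), (j:ℤ) * p j =
        ((if j = 1 then (j:ℤ) * k else 0) + (if j = n+1 then (j:ℤ) * k else 0))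
          - (j:ℤ) * (m j - m (j+1)) := by
      intro j hj
      rw [hp j hj]
      split_ifs <;> ring
    rw [Finset.sum_congr rfl e1, Finset.sum_sub_distrib, Finset.sum_add_distrib, abel]
    rw [Finset.sum_ite_eq' (Finset.Icc 1 (n+1)) 1 (fun j => (j:ℤ) * k),
      Finset.sum_ite_eq' (Finset.Icc 1 (n+1)) (n+1) (fun j => (j:ℤ) * k)]
    rw [if_pos (show (1:ℕ) ∈ Finset.Icc 1 (n+1) from Finset.mem_Icc.mpr (by omega)),
      if_pos (show n+1 ∈ Finset.Icc 1 (n+1) from Finset.mem_Icc.mpr (by omega))]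
    have hsplit : ∑ j ∈ Finset.Icc 1 (n+1), m j = - m (n+2) := by
      have h2 := Finset.sum_Icc_succ_top (by omega : 1 ≤ n+2) m
      rw [show n+2 = (n+1)+1 from rfl] at hm0
      rw [h2] at hm0
      rw [show n+2 = (n+1)+1 from rfl]
      linarith
    rw [hsplit, show n+1+1 = n+2 from rfl]
    refine ⟨k + m (n+2), ?_⟩
    push_cast
    ring
  · rintro ⟨c, hc⟩
    set P : ℕ → ℤ := fun t => ∑ i ∈ Finset.Icc 1 t, p i with hPdef
    have hP : ∀ t : ℕ, P (t+1) = P t + p (t+1) := by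
      intro t
      exact Finset.sum_Icc_succ_top (by omega) p
    set Q : ℤ := P (n+1) with hQdef
    set f : ℕ → ℤ := fun t => t * (c - Q) + ∑ u ∈ Finset.range t, P u with hfdef
    have hf : ∀ t : ℕ, f (t+1) = f t + (c - Q) + P t := by
      intro t
      simp only [hfdef, Finset.sum_range_succ]
      push_cast; ring
    have hS : ∀ t : ℕ, ∑ j ∈ Finset.Icc 1 t, (j:ℤ) * p j
        = t * P t - ∑ u ∈ Finset.range t, P u := by
      intro t
      induction t with
      | zero => simp [hPdef]
      | succ t ih =>
          rw [Finset.sum_Icc_succ_top (by omega : 1 ≤ t+1), ih, Finset.sum_range_succ, hP]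
          push_cast; ring
    set k : ℤ := ∑ t ∈ Finset.Icc 1 (n+1), |f t| with hkdef
    set a : ℕ → ℤ := fun t => if 1 ≤ t ∧ t ≤ n+1 then k + f t else 0 with hadef
    have ha_nonneg : ∀ t, 0 ≤ a t := by
      intro t
      simp only [hadef]
      split_ifs with h
      · have h1 : |f t| ≤ k :=
          Finset.single_le_sum (f := fun i => |f i|) (fun i _ => abs_nonneg (f i))
            (Finset.mem_Icc.mpr h)
        have h2 := neg_abs_le (f t)
        linarith
      · exact le_refl 0
    have ha0 : a 0 = 0 := by simp [hadef]
    have haIn : ∀ t, 1 ≤ t → t ≤ n+1 → a t = k + f t := by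
      intro t h1 h2
      simp [hadef, h1, h2]
    have haTop : a (n+2) = 0 := by
      simp only [hadef]
      rw [if_neg (by omega)]
    refine ⟨k, fun j l => (if l = j+1 then a j else 0) + (if j = l+1 then -(a l) else 0),
      ?_, ?_, ?_⟩
    · intro j hj l hl
      dsimp only
      split_ifs <;> ring
    · intro j hj l hl hjl
      dsimp only
      rw [if_neg (show ¬ j = l + 1 by omega), add_zero]
      split_ifs with h1
      · exact ha_nonneg j
      · exact le_refl 0
    · intro j hj
      rw [Finset.mem_Icc] at hj
      have hrow : ∀ i, 1 ≤ i → i ≤ n + 2 →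
          (∑ l ∈ Finset.Icc 1 (n+2),
            ((if l = i+1 then a i else 0) + (if i = l+1 then -(a l) else 0)))
          = a i - a (i-1) := by
        intro i hi1 hi2
        rw [Finset.sum_add_distrib]
        have t1 : ∑ l ∈ Finset.Icc 1 (n+2), (if l = i+1 then a i else 0) = a i := by
          rw [Finset.sum_ite_eq' (Finset.Icc 1 (n+2)) (i+1) (fun _ => a i)]
          by_cases h : i + 1 ∈ Finset.Icc 1 (n+2)
          · rw [if_pos h]
          · rw [if_neg h]
            rw [Finset.mem_Icc] at h
            simp only [hadef]
            rw [if_neg (by omega)]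
        have t2 : ∑ l ∈ Finset.Icc 1 (n+2), (if i = l+1 then -(a l) else 0) = -(a (i-1)) := by
          rcases Nat.lt_or_ge i 2 with h2 | h2
          · have hi : i = 1 := by omega
            subst hi
            rw [Finset.sum_eq_zero]
            · simp [hadef]
            · intro l hl
              rw [Finset.mem_Icc] at hl
              rw [if_neg (by omega)]
          · rw [Finset.sum_eq_single_of_mem (i-1) (Finset.mem_Icc.mpr (by omega))]
            · rw [if_pos (by omega)]
            · intro l hl hne
              rw [if_neg (by omega)]
        rw [t1, t2]
        ring
      dsimp only
      rw [hrow j hj.1 (by omega), hrow (j+1) (by omega) (by omega)]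
      simp only [Nat.add_sub_cancel]
      -- goal: p j = ite + ite - ((a j - a (j-1)) - (a (j+1) - a j))
      rcases Nat.lt_or_ge 1 (n+1) with hn | hn
      · -- n ≥ 1
        rcases Nat.lt_or_ge 1 j with hj1 | hj1
        · rcases Nat.lt_or_ge j (n+1) with hjn | hjn
          · -- interior: 2 ≤ j ≤ n
            obtain ⟨i, rfl⟩ : ∃ i, j = i + 2 := ⟨j - 2, by omega⟩
            rw [if_neg (by omega), if_neg (by omega)]
            rw [show i + 2 - 1 = i + 1 from rfl]
            rw [haIn (i+2) (by omega) (by omega), haIn (i+1) (by omega) (by omega),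
              haIn (i+2+1) (by omega) (by omega)]
            have h1 := hf (i+1)
            have h2 := hf (i+2)
            have h3 := hP (i+1)
            rw [show i+2+1 = (i+2)+1 from rfl]
            linarith
          · -- j = n+1 ≥ 2
            have hj' : j = n + 1 := by omega
            subst hj'
            rw [if_neg (by omega), if_pos rfl]
            rw [show n + 1 - 1 = n from rfl]
            rw [haIn (n+1) (by omega) (by omega), haIn n (by omega) (by omega),
              show n+1+1 = n+2 from rfl, haTop]
            have h1 := hf n
            have h2 := hP n
            rw [hS (n+1)] at hc
            have h4 : f (n+1) = (n+1 : ℕ) * (c - Q) + ∑ u ∈ Finset.range (n+1), P u := rfl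
            rw [← hQdef] at hc h2
            push_cast at h4 hc ⊢
            linarith
        · -- j = 1, n ≥ 1
          have hj' : j = 1 := by omega
          subst hj'
          rw [if_pos rfl, if_neg (by omega)]
          rw [show (1:ℕ) - 1 = 0 from rfl, ha0]
          rw [haIn 1 (by omega) (by omega), haIn 2 (by omega) (by omega)]
          have h1 := hf 0
          have h2 := hf 1
          have h3 := hP 0
          have h4 : f 0 = 0 := by simp [hfdef]
          have h5 : P 0 = 0 := by simp [hPdef]
          linarith
      · -- n = 0, j = 1
        have hn0 : n = 0 := by omega
        subst hn0
        have hj' : j = 1 := by omega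
        subst hj'
        rw [if_pos rfl]
        rw [show (1:ℕ) - 1 = 0 from rfl, ha0]
        rw [haIn 1 (by omega) (by omega), show (1:ℕ)+1 = 0+2 from rfl, haTop]
        have h1 := hf 0
        have h3 := hP 0
        have h4 : f 0 = 0 := by simp [hfdef]
        have h5 : P 0 = 0 := by simp [hPdef]
        rw [hS 1] at hc
        have h9 : ∑ u ∈ Finset.range 1, P u = P 0 := by simp
        rw [← hQdef] at hc h3
        push_cast at hc ⊢
        linarith
end

section
/- Let N ≥ 2, let M be an N×N antisymmetric integer matrix with nonnegative upper entries, let k be an integer, and suppose p_j = k·δ_{j,1} + k·δ_{j,N−1} − Δp_j for all 1 ≤ j ≤ N−1. Then for every 1 ≤ n ≤ N−1 one has N·k ≥ (N−n)·∑_{j=1}^{N−1} j·p_j − N·∑_{j=n+1}^{N−1} (j−n)·p_j. -/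
open Finset

private lemma tele5 (f : ℕ → ℤ) : ∀ (a b : ℕ), a ≤ b + 1 →
    ∑ j ∈ Finset.Icc a b, ((j : ℤ) - ((a : ℤ) - 1)) * (f j - f (j + 1))
      = ∑ j ∈ Finset.Icc a b, f j - (((b : ℤ) - (a : ℤ)) + 1) * f (b + 1) := by
  intro a b
  induction b with
  | zero =>
    intro hab
    interval_cases a
    · simp
    · simp
  | succ b ih =>
    intro hab
    rcases Nat.lt_or_ge (b + 1) a with h | h
    · have ha : a = b + 2 := by omega
      subst ha
      rw [Finset.Icc_eq_empty (by omega)]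
      push_cast
      simp
    · rw [Finset.sum_Icc_succ_top (by omega), Finset.sum_Icc_succ_top (by omega),
        ih (by omega)]
      push_cast
      ring

private lemma skew_sum5 (M : ℕ → ℕ → ℤ) (s : Finset ℕ)
    (h : ∀ j ∈ s, ∀ l ∈ s, M j l = - M l j) :
    ∑ j ∈ s, ∑ l ∈ s, M j l = 0 := by
  have h1 : ∑ j ∈ s, ∑ l ∈ s, M j l = ∑ j ∈ s, ∑ l ∈ s, (- M l j) :=
    Finset.sum_congr rfl fun j hj => Finset.sum_congr rfl fun l hl => h j hj l hl
  have h2 : ∑ j ∈ s, ∑ l ∈ s, M l j = ∑ j ∈ s, ∑ l ∈ s, M j l := Finset.sum_comm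
  simp only [Finset.sum_neg_distrib] at h1
  linarith

/-- Let `N ≥ 2`, let `M` be an `N × N` antisymmetric integer
matrix with nonnegative upper entries (row sums `m j`), let `k` be an integer,
and suppose `p j = k·δ_{j,1} + k·δ_{j,N-1} - (m j - m (j+1))` for `1 ≤ j ≤ N-1`.
Then for every `1 ≤ n ≤ N-1`,
`N·k ≥ (N-n)·∑_{j=1}^{N-1} j·p j - N·∑_{j=n+1}^{N-1} (j-n)·p j`. -/
theorem stmt_5 (N : ℕ) (hN : 2 ≤ N) (M : ℕ → ℕ → ℤ)
    (hanti : ∀ j ∈ Finset.Icc 1 N, ∀ l ∈ Finset.Icc 1 N, M j l = - M l j)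
    (hupper : ∀ j ∈ Finset.Icc 1 N, ∀ l ∈ Finset.Icc 1 N, j < l → 0 ≤ M j l)
    (k : ℤ) (p : ℕ → ℤ)
    (hp : ∀ j ∈ Finset.Icc 1 (N - 1),
      p j = (if j = 1 then k else 0) + (if j = N - 1 then k else 0)
        - ((∑ l ∈ Finset.Icc 1 N, M j l) - (∑ l ∈ Finset.Icc 1 N, M (j + 1) l))) :
    ∀ n, 1 ≤ n → n ≤ N - 1 →
      ((N : ℤ) - n) * (∑ j ∈ Finset.Icc 1 (N - 1), (j : ℤ) * p j)
        - (N : ℤ) * (∑ j ∈ Finset.Icc (n + 1) (N - 1), ((j : ℤ) - n) * p j)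
      ≤ (N : ℤ) * k := by
  intro n hn1 hnN
  set m : ℕ → ℤ := fun j => ∑ l ∈ Finset.Icc 1 N, M j l with hm
  have hNN : N - 1 + 1 = N := by omega
  have hN1 : ((N - 1 : ℕ) : ℤ) = (N : ℤ) - 1 := by
    rw [Nat.cast_sub (by omega)]; simp
  -- total row sum is zero
  have htotal : ∑ j ∈ Finset.Icc 1 N, m j = 0 := skew_sum5 M _ hanti
  -- tail sum is nonpositive
  have htail : ∑ j ∈ Finset.Icc (n + 1) N, m j ≤ 0 := by
    have e : ∀ j : ℕ, m j = (∑ l ∈ Finset.Ioc 0 n, M j l) + ∑ l ∈ Finset.Ioc n N, M j l := by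
      intro j
      rw [hm]
      rw [show Finset.Icc 1 N = Finset.Ioc 0 N from Finset.Icc_add_one_left_eq_Ioc 0 N]
      exact (Finset.sum_Ioc_consecutive _ (by omega) (by omega)).symm
    rw [Finset.Icc_add_one_left_eq_Ioc, Finset.sum_congr rfl fun j _ => e j, Finset.sum_add_distrib]
    have hz : ∑ j ∈ Finset.Ioc n N, ∑ l ∈ Finset.Ioc n N, M j l = 0 := by
      refine skew_sum5 M _ fun j hj l hl => hanti j ?_ l ?_ <;>
        simp only [Finset.mem_Ioc, Finset.mem_Icc] at * <;> omega
    have hneg : ∑ j ∈ Finset.Ioc n N, ∑ l ∈ Finset.Ioc 0 n, M j l ≤ 0 := by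
      refine Finset.sum_nonpos fun j hj => Finset.sum_nonpos fun l hl => ?_
      simp only [Finset.mem_Ioc] at hj hl
      have h1 : M l j ≥ 0 := hupper l (by simp only [Finset.mem_Icc]; omega)
        j (by simp only [Finset.mem_Icc]; omega) (by omega)
      have h2 : M j l = - M l j := hanti j (by simp only [Finset.mem_Icc]; omega)
        l (by simp only [Finset.mem_Icc]; omega)
      linarith
    linarith
  -- first sum
  have hS1 : ∑ j ∈ Finset.Icc 1 (N - 1), (j : ℤ) * p j = (N : ℤ) * k + (N : ℤ) * m N := by
    have e1 : ∑ j ∈ Finset.Icc 1 (N - 1), (j : ℤ) * p j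
        = (∑ j ∈ Finset.Icc 1 (N - 1), (if j = 1 then (j : ℤ) * k else 0))
          + (∑ j ∈ Finset.Icc 1 (N - 1), (if j = N - 1 then (j : ℤ) * k else 0))
          - ∑ j ∈ Finset.Icc 1 (N - 1), (j : ℤ) * (m j - m (j + 1)) := by
      rw [← Finset.sum_add_distrib, ← Finset.sum_sub_distrib]
      refine Finset.sum_congr rfl fun j hj => ?_
      rw [hp j hj]
      split_ifs <;> ring
    rw [e1, Finset.sum_ite_eq' (Finset.Icc 1 (N - 1)) 1 (fun j => (j : ℤ) * k),
      Finset.sum_ite_eq' (Finset.Icc 1 (N - 1)) (N - 1) (fun j => (j : ℤ) * k),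
      if_pos (by simp only [Finset.mem_Icc]; omega),
      if_pos (by simp only [Finset.mem_Icc]; omega)]
    have e4 := tele5 m 1 (N - 1) (by omega)
    simp only [Nat.cast_one, sub_self, sub_zero] at e4
    rw [hNN] at e4
    rw [e4]
    have e5 : ∑ j ∈ Finset.Icc 1 (N - 1), m j = - m N := by
      have h := Finset.sum_Icc_succ_top (a := 1) (b := N - 1) (by omega) m
      rw [hNN] at h
      linarith
    rw [e5, hN1]
    push_cast
    ring
  -- second sum
  have hS2 : ∑ j ∈ Finset.Icc (n + 1) (N - 1), ((j : ℤ) - n) * p j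
      = ((N : ℤ) - 1 - n) * k
        - ((∑ j ∈ Finset.Icc (n + 1) N, m j) - m N - ((N : ℤ) - 1 - n) * m N) := by
    have e1 : ∑ j ∈ Finset.Icc (n + 1) (N - 1), ((j : ℤ) - n) * p j
        = (∑ j ∈ Finset.Icc (n + 1) (N - 1), (if j = 1 then ((j : ℤ) - n) * k else 0))
          + (∑ j ∈ Finset.Icc (n + 1) (N - 1), (if j = N - 1 then ((j : ℤ) - n) * k else 0))
          - ∑ j ∈ Finset.Icc (n + 1) (N - 1), ((j : ℤ) - n) * (m j - m (j + 1)) := by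
      rw [← Finset.sum_add_distrib, ← Finset.sum_sub_distrib]
      refine Finset.sum_congr rfl fun j hj => ?_
      simp only [Finset.mem_Icc] at hj
      rw [hp j (by simp only [Finset.mem_Icc]; omega)]
      split_ifs <;> ring
    rw [e1, Finset.sum_ite_eq' (Finset.Icc (n + 1) (N - 1)) 1 (fun j => ((j : ℤ) - n) * k),
      Finset.sum_ite_eq' (Finset.Icc (n + 1) (N - 1)) (N - 1) (fun j => ((j : ℤ) - n) * k),
      if_neg (by simp only [Finset.mem_Icc]; omega)]
    have e3 : (if N - 1 ∈ Finset.Icc (n + 1) (N - 1) then (((N - 1 : ℕ) : ℤ) - (n : ℤ)) * k else 0)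
        = ((N : ℤ) - 1 - n) * k := by
      by_cases hc : n + 1 ≤ N - 1
      · rw [if_pos (by simp only [Finset.mem_Icc]; omega), hN1]
      · rw [if_neg (by simp only [Finset.mem_Icc]; omega)]
        have hn : n = N - 1 := by omega
        have : (n : ℤ) = (N : ℤ) - 1 := by rw [hn, hN1]
        rw [this]; ring
    have e3' : (∑ j ∈ Finset.Icc (n+1) (N-1), (0:ℤ)) = 0 := Finset.sum_const_zero
    have e4 := tele5 m (n + 1) (N - 1) (by omega)
    have e4' : ∀ j ∈ Finset.Icc (n + 1) (N - 1),
        ((j : ℤ) - n) * (m j - m (j + 1))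
          = ((j : ℤ) - (((n + 1 : ℕ) : ℤ) - 1)) * (m j - m (j + 1)) := by
      intro j _; push_cast; ring
    rw [Finset.sum_congr rfl e4', e4, hNN]
    have e5 : ∑ j ∈ Finset.Icc (n + 1) (N - 1), m j
        = (∑ j ∈ Finset.Icc (n + 1) N, m j) - m N := by
      have h := Finset.sum_Icc_succ_top (a := n + 1) (b := N - 1) (by omega) m
      rw [hNN] at h
      linarith
    rw [e5, e3, hN1]
    push_cast
    ring
  rw [hS1, hS2]
  have hNpos : (0 : ℤ) ≤ (N : ℤ) := by positivity
  nlinarith [mul_nonpos_of_nonneg_of_nonpos hNpos htail]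
end

section
/- Let N = 5 and let p_1, p_2, p_3, p_4 be nonnegative integers with p_4 ≤ p_1, p_1 ≤ 3p_2 + 2p_3 + p_4, and 2p_2 ≥ 2p_3 + p_4 − p_1. Then max{k_1, k_2, k_3, k_4} = (3p_1 + 6p_2 + 4p_3 + 2p_4)/5. -/
/-- For `N = 5` and nonnegative integers `p1, p2, p3, p4` with
`p4 ≤ p1`, `p1 ≤ 3p2 + 2p3 + p4` and `2p2 ≥ 2p3 + p4 - p1`, with
`k n := (n/5)·∑_{j=1}^{4} j·p j - ∑_{j=1}^{n} (n-j)·p (5-j)`, one has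
`max {k 1, k 2, k 3, k 4} = (3p1+6p2+4p3+2p4)/5`. -/
theorem stmt_11 (p1 p2 p3 p4 : ℕ) (h1 : p4 ≤ p1) (h2 : p1 ≤ 3 * p2 + 2 * p3 + p4)
    (h3 : 2 * (p3 : ℤ) + p4 - p1 ≤ 2 * p2) :
    let p : ℕ → ℚ := fun j =>
      if j = 1 then (p1 : ℚ) else if j = 2 then (p2 : ℚ)
        else if j = 3 then (p3 : ℚ) else if j = 4 then (p4 : ℚ) else 0
    let k : ℕ → ℚ := fun n =>
      ((n : ℚ) / 5) * ∑ j ∈ Finset.Icc (1 : ℕ) 4, (j : ℚ) * p j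
        - ∑ j ∈ Finset.Icc (1 : ℕ) n, ((n : ℚ) - j) * p (5 - j)
    max (k 1) (max (k 2) (max (k 3) (k 4)))
      = (3 * (p1 : ℚ) + 6 * p2 + 4 * p3 + 2 * p4) / 5 := by
  intro p k
  have hq1 : (p4:ℚ) ≤ p1 := by exact_mod_cast h1
  have hq2 : (p1:ℚ) ≤ 3*p2+2*p3+p4 := by exact_mod_cast h2
  have hq3 : 2*(p3:ℚ)+p4-p1 ≤ 2*p2 := by exact_mod_cast h3
  simp only [k, p, show Finset.Icc 1 4 = ({1,2,3,4}:Finset ℕ) from rfl,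
    show Finset.Icc 1 1 = ({1}:Finset ℕ) from rfl,
    show Finset.Icc 1 2 = ({1,2}:Finset ℕ) from rfl,
    show Finset.Icc 1 3 = ({1,2,3}:Finset ℕ) from rfl]
  norm_num
  apply le_antisymm
  · simp only [sup_le_iff]
    refine ⟨by linarith, by linarith, by linarith, by linarith⟩
  · have h : (3*(p1:ℚ)+6*p2+4*p3+2*p4)/5
        = 3/5*((p1:ℚ)+(2*p2+(3*p3+4*p4))) - (2*p4+p3) := by ring
    rw [h]
    exact le_sup_of_le_right (le_sup_of_le_right le_sup_left)
end

section
/- Let N ≥ 2 and let p_1, …, p_{N−1} be nonnegative integers with p_1 ≥ ∑_{i=2}^{N−1} (N−i)·p_i. Then max{k_n : 1 ≤ n ≤ N−1} = (1/N)·∑_{i=1}^{N−1} (N−i)·p_i, and the maximum is attained at n = N−1. -/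
open Finset in
/-- For `N ≥ 2` and nonnegative integers `p 1, …, p (N-1)` with
`p 1 ≥ ∑_{i=2}^{N-1} (N-i)·p i`, with
`k n := (n/N)·∑_{j=1}^{N-1} j·p j - ∑_{j=1}^{n} (n-j)·p (N-j)`, one has
`max {k n | 1 ≤ n ≤ N-1} = (1/N)·∑_{i=1}^{N-1} (N-i)·p i`, the maximum being
attained at `n = N-1`. -/
theorem stmt_13 (N : ℕ) (hN : 2 ≤ N) (p : ℕ → ℕ)
    (hp : ∑ i ∈ Finset.Icc 2 (N - 1), ((N : ℤ) - i) * p i ≤ (p 1 : ℤ)) :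
    let k : ℕ → ℚ := fun n =>
      ((n : ℚ) / N) * ∑ j ∈ Finset.Icc 1 (N - 1), (j : ℚ) * p j
        - ∑ j ∈ Finset.Icc 1 n, ((n : ℚ) - j) * p (N - j)
    k (N - 1) = (1 / (N : ℚ)) * ∑ i ∈ Finset.Icc 1 (N - 1), ((N : ℚ) - i) * p i ∧
      ∀ n ∈ Finset.Icc 1 (N - 1), k n ≤ k (N - 1) := by
  intro k
  have hk : ∀ n, k n = ((n : ℚ) / N) * ∑ j ∈ Finset.Icc 1 (N - 1), (j : ℚ) * p j
        - ∑ j ∈ Finset.Icc 1 n, ((n : ℚ) - j) * p (N - j) := fun n => rfl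
  have hN0 : (0:ℚ) < N := by exact_mod_cast (by omega : 0 < N)
  set S : ℚ := ∑ j ∈ Icc 1 (N-1), (j:ℚ) * p j with hSdef
  -- general reindexing lemma
  have reindex : ∀ n, n ≤ N - 1 → ∀ f : ℕ → ℚ,
      ∑ j ∈ Icc 1 n, f j = ∑ i ∈ Icc (N - n) (N - 1), f (N - i) := by
    intro n hn f
    refine Finset.sum_nbij' (fun j => N - j) (fun i => N - i) ?_ ?_ ?_ ?_ ?_ <;>
      intro a ha <;> simp only [Finset.mem_Icc] at * <;> first | omega | (congr 1; omega)
  -- Part 1 : value of k (N-1)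
  have part1 : k (N - 1) = (1 / (N : ℚ)) * ∑ i ∈ Finset.Icc 1 (N - 1), ((N : ℚ) - i) * p i := by
    rw [hk]
    have h2 : ∑ j ∈ Icc 1 (N-1), (((N-1 : ℕ) : ℚ) - j) * p (N - j)
        = ∑ i ∈ Icc 1 (N-1), ((i:ℚ) - 1) * p i := by
      have := reindex (N-1) le_rfl (fun j => (((N-1 : ℕ) : ℚ) - j) * p (N - j))
      have hNN : N - (N - 1) = 1 := by omega
      rw [hNN] at this
      rw [this]
      refine Finset.sum_congr rfl ?_
      intro i hi
      simp only [Finset.mem_Icc] at hi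
      have h1 : N - (N - i) = i := by omega
      have h2 : ((N - i : ℕ) : ℚ) = (N : ℚ) - i := by
        have : i ≤ N := by omega
        push_cast [this]; ring
      have h3 : ((N - 1 : ℕ) : ℚ) = (N : ℚ) - 1 := by
        have : 1 ≤ N := by omega
        push_cast [this]; ring
      rw [h1, h2, h3]; ring
    rw [h2, hSdef, Finset.mul_sum, Finset.mul_sum, ← Finset.sum_sub_distrib]
    refine Finset.sum_congr rfl ?_
    intro i hi
    have h3 : ((N - 1 : ℕ) : ℚ) = (N : ℚ) - 1 := by
      have : 1 ≤ N := by omega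
      push_cast [this]; ring
    rw [h3]
    field_simp
    ring
  refine ⟨part1, ?_⟩
  -- hypothesis in ℚ
  have hpQ : ∑ i ∈ Icc 2 (N-1), ((N:ℚ) - i) * p i ≤ (p 1 : ℚ) := by
    exact_mod_cast hp
  have hS1 : S = 1 * (p 1 : ℚ) + ∑ j ∈ Icc 2 (N-1), (j:ℚ) * p j := by
    rw [hSdef, show Icc 1 (N-1) = insert 1 (Icc 2 (N-1)) by
      ext x; simp [Finset.mem_Icc, Finset.mem_insert]; omega,
      Finset.sum_insert (by simp [Finset.mem_Icc])]
    norm_num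
  have hkey : ∑ i ∈ Icc 2 (N-1), (p i : ℚ) ≤ S / N := by
    rw [le_div_iff₀ hN0]
    calc (∑ i ∈ Icc 2 (N-1), (p i : ℚ)) * N
        = ∑ i ∈ Icc 2 (N-1), (((N:ℚ) - i) * p i + (i:ℚ) * p i) := by
          rw [Finset.sum_mul]; refine Finset.sum_congr rfl fun i _ => by ring
      _ = (∑ i ∈ Icc 2 (N-1), ((N:ℚ) - i) * p i) + ∑ i ∈ Icc 2 (N-1), (i:ℚ) * p i := by
          rw [Finset.sum_add_distrib]
      _ ≤ (p 1 : ℚ) + ∑ i ∈ Icc 2 (N-1), (i:ℚ) * p i := by gcongr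
      _ = S := by rw [hS1]; ring
  -- step lemma
  have step : ∀ n, 1 ≤ n → n ≤ N - 2 → k n ≤ k (n + 1) := by
    intro n h1 h2
    have hsplit : ∑ j ∈ Icc 1 (n+1), (((n+1 : ℕ):ℚ) - j) * p (N - j)
        = ∑ j ∈ Icc 1 n, ((n:ℚ) - j) * p (N - j) + ∑ j ∈ Icc 1 n, (p (N - j) : ℚ) := by
      rw [Finset.sum_Icc_succ_top (by omega : 1 ≤ n + 1)]
      push_cast
      rw [← Finset.sum_add_distrib]
      rw [show ((n:ℚ) + 1 - ((n:ℚ)+1)) * p (N - (n+1)) = 0 by ring, add_zero]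
      refine Finset.sum_congr rfl fun j hj => by ring
    have hbound : ∑ j ∈ Icc 1 n, (p (N - j) : ℚ) ≤ S / N := by
      have hre := reindex n (by omega) (fun j => (p (N - j) : ℚ))
      refine le_trans ?_ hkey
      rw [hre]
      have hsub : Icc (N - n) (N - 1) ⊆ Icc 2 (N - 1) := by
        intro x hx; simp only [Finset.mem_Icc] at *; omega
      calc ∑ i ∈ Icc (N - n) (N - 1), (p (N - (N - i)) : ℚ)
          = ∑ i ∈ Icc (N - n) (N - 1), (p i : ℚ) := by
            refine Finset.sum_congr rfl fun i hi => ?_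
            simp only [Finset.mem_Icc] at hi
            congr 2; omega
        _ ≤ ∑ i ∈ Icc 2 (N - 1), (p i : ℚ) := by
            refine Finset.sum_le_sum_of_subset_of_nonneg hsub fun i _ _ => by positivity
    rw [hk, hk, hsplit]
    have hc : (((n+1:ℕ)):ℚ) / N * S = (n:ℚ)/N * S + S / N := by
      push_cast; field_simp
    rw [hc]
    have := sub_nonneg.mpr hbound
    linarith
  -- monotonicity
  have mono : ∀ b, b ≤ N - 1 → ∀ a, 1 ≤ a → a ≤ b → k a ≤ k b := by
    intro b
    induction b with
    | zero => intro _ a ha hab; omega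
    | succ m ih =>
      intro hb a ha hab
      rcases eq_or_lt_of_le hab with rfl | h
      · exact le_refl _
      · have ham : a ≤ m := by omega
        calc k a ≤ k m := ih (by omega) a ha ham
          _ ≤ k (m+1) := step m (by omega) (by omega)
  intro n hn
  simp only [Finset.mem_Icc] at hn
  exact mono (N-1) le_rfl n hn.1 hn.2
end

section
/- Let N ≥ 3 and let p_1, …, p_{N−1} be nonnegative integers with p_{N−1} ≤ p_1, p_1 ≤ ∑_{i=2}^{N−1} (N−i)·p_i, and 2p_2 ≥ ∑_{i=3}^{N−1} (N−i)·p_i − p_1. Then max{k_n : 1 ≤ n ≤ N−1} = (2/N)·∑_{i=1}^{N−1} (N−i)·p_i − p_1, and the maximum is attained at n = N−2. -/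
open Finset

/-- Reindexing `j ↦ N - j` for sums over `Icc 1 m` with `m ≤ N - 1`. -/
lemma reindex_aux (N m : ℕ) (hN : 1 ≤ N) (hm : m ≤ N - 1) (F : ℕ → ℚ) :
    ∑ j ∈ Icc 1 m, F j = ∑ i ∈ Icc (N - m) (N - 1), F (N - i) := by
  refine Finset.sum_nbij' (fun j => N - j) (fun i => N - i) ?_ ?_ ?_ ?_ ?_
  · intro a ha; simp only [mem_Icc] at *; omega
  · intro a ha; simp only [mem_Icc] at *; omega
  · intro a ha; simp only [mem_Icc] at ha; omega
  · intro a ha; simp only [mem_Icc] at ha; omega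
  · intro a ha; simp only [mem_Icc] at ha
    congr 1; omega

/-- For `N ≥ 3` and nonnegative integers `p 1, …, p (N-1)` with
`p (N-1) ≤ p 1`, `p 1 ≤ ∑_{i=2}^{N-1} (N-i)·p i` and
`2·p 2 ≥ ∑_{i=3}^{N-1} (N-i)·p i - p 1`, with
`k n := (n/N)·∑_{j=1}^{N-1} j·p j - ∑_{j=1}^{n} (n-j)·p (N-j)`, one has
`max {k n | 1 ≤ n ≤ N-1} = (2/N)·∑_{i=1}^{N-1} (N-i)·p i - p 1`, the maximum
being attained at `n = N-2`. -/
theorem stmt_14 (N : ℕ) (hN : 3 ≤ N) (p : ℕ → ℕ)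
    (h1 : p (N - 1) ≤ p 1)
    (h2 : (p 1 : ℤ) ≤ ∑ i ∈ Finset.Icc 2 (N - 1), ((N : ℤ) - i) * p i)
    (h3 : (∑ i ∈ Finset.Icc 3 (N - 1), ((N : ℤ) - i) * p i) - p 1 ≤ 2 * (p 2 : ℤ)) :
    let k : ℕ → ℚ := fun n =>
      ((n : ℚ) / N) * ∑ j ∈ Finset.Icc 1 (N - 1), (j : ℚ) * p j
        - ∑ j ∈ Finset.Icc 1 n, ((n : ℚ) - j) * p (N - j)
    k (N - 2) = (2 / (N : ℚ)) * (∑ i ∈ Finset.Icc 1 (N - 1), ((N : ℚ) - i) * p i)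
        - (p 1 : ℚ) ∧
      ∀ n ∈ Finset.Icc 1 (N - 1), k n ≤ k (N - 2) := by
  intro k
  have hNQ : (N : ℚ) ≠ 0 := by positivity
  set S : ℚ := ∑ j ∈ Finset.Icc 1 (N - 1), (j : ℚ) * p j with hS
  -- split of the first index
  have hsplit1 : Finset.Icc 1 (N - 1) = insert 1 (Finset.Icc 2 (N - 1)) := by
    ext x; simp only [mem_Icc, mem_insert]; omega
  have hsplit2 : Finset.Icc 1 (N - 1) = insert 1 (insert 2 (Finset.Icc 3 (N - 1))) := by
    ext x; simp only [mem_Icc, mem_insert]; omega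
  have h1notin : (1 : ℕ) ∉ Finset.Icc 2 (N - 1) := by simp
  have h1notin2 : (1 : ℕ) ∉ insert 2 (Finset.Icc 3 (N - 1)) := by simp
  have h2notin : (2 : ℕ) ∉ Finset.Icc 3 (N - 1) := by simp
  -- part 1
  have hre1 : ∑ j ∈ Finset.Icc 1 (N - 2), ((↑(N - 2) : ℚ) - j) * p (N - j)
      = ∑ i ∈ Finset.Icc 2 (N - 1), ((i : ℚ) - 2) * p i := by
    rw [reindex_aux N (N - 2) (by omega) (by omega)]
    rw [show N - (N - 2) = 2 by omega]
    refine Finset.sum_congr rfl ?_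
    intro i hi; simp only [mem_Icc] at hi
    rw [show N - (N - i) = i by omega]
    congr 1
    have : ((N - 2 : ℕ) : ℚ) = (N : ℚ) - 2 := by
      have := Nat.cast_sub (by omega : 2 ≤ N) (R := ℚ); push_cast at this ⊢; linarith
    have h2 : ((N - i : ℕ) : ℚ) = (N : ℚ) - i := by
      have := Nat.cast_sub (by omega : i ≤ N) (R := ℚ); push_cast at this ⊢; linarith
    rw [this, h2]; ring
  have hpart1 : k (N - 2) = (2 / (N : ℚ)) * (∑ i ∈ Finset.Icc 1 (N - 1), ((N : ℚ) - i) * p i)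
      - (p 1 : ℚ) := by
    show ((↑(N - 2) : ℚ) / N) * S - ∑ j ∈ Finset.Icc 1 (N - 2), ((↑(N - 2) : ℚ) - j) * p (N - j)
        = _
    rw [hre1]
    have hc : ((N - 2 : ℕ) : ℚ) = (N : ℚ) - 2 := by
      have := Nat.cast_sub (by omega : 2 ≤ N) (R := ℚ); push_cast at this ⊢; linarith
    rw [hc, hS, hsplit1, Finset.sum_insert h1notin, Finset.sum_insert h1notin]
    have key : ((N : ℚ) - 2) * (∑ i ∈ Finset.Icc 2 (N - 1), (i : ℚ) * p i)
        - (N : ℚ) * ∑ i ∈ Finset.Icc 2 (N - 1), ((i : ℚ) - 2) * p i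
        = 2 * ∑ i ∈ Finset.Icc 2 (N - 1), ((N : ℚ) - i) * p i := by
      rw [Finset.mul_sum, Finset.mul_sum, Finset.mul_sum, ← Finset.sum_sub_distrib]
      exact Finset.sum_congr rfl fun i _ => by ring
    field_simp
    push_cast
    linear_combination key
  refine ⟨hpart1, ?_⟩
  -- the step quantity
  set D : ℕ → ℚ := fun n => S / N - ∑ j ∈ Finset.Icc 1 n, (p (N - j) : ℚ) with hD
  have hstep : ∀ n : ℕ, k (n + 1) = k n + D n := by
    intro n
    show ((↑(n + 1) : ℚ) / N) * S - ∑ j ∈ Finset.Icc 1 (n + 1), ((↑(n + 1) : ℚ) - j) * p (N - j)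
        = (((n : ℚ) / N) * S - ∑ j ∈ Finset.Icc 1 n, ((n : ℚ) - j) * p (N - j)) + D n
    rw [Finset.sum_Icc_succ_top (by omega : 1 ≤ n + 1)]
    have : ∑ j ∈ Finset.Icc 1 n, ((↑(n + 1) : ℚ) - j) * p (N - j)
        = ∑ j ∈ Finset.Icc 1 n, (((n : ℚ) - j) * p (N - j) + (p (N - j) : ℚ)) := by
      refine Finset.sum_congr rfl fun j _ => ?_; push_cast; ring
    rw [this, Finset.sum_add_distrib, hD]
    push_cast
    ring
  -- D is antitone
  have hDanti : ∀ m n : ℕ, m ≤ n → D n ≤ D m := by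
    intro m n hmn
    induction n with
    | zero => simp_all
    | succ n ih =>
      rcases Nat.eq_or_lt_of_le hmn with h | h
      · rw [h]
      · have hle : m ≤ n := by omega
        refine le_trans ?_ (ih hle)
        simp only [hD]
        rw [Finset.sum_Icc_succ_top (by omega : 1 ≤ n + 1)]
        have : (0 : ℚ) ≤ (p (N - (n + 1)) : ℚ) := by positivity
        linarith
  -- reindexed sums for D (N-2) and D (N-3)
  have hre2 : ∑ j ∈ Finset.Icc 1 (N - 2), (p (N - j) : ℚ)
      = ∑ i ∈ Finset.Icc 2 (N - 1), (p i : ℚ) := by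
    rw [reindex_aux N (N - 2) (by omega) (by omega), show N - (N - 2) = 2 by omega]
    refine Finset.sum_congr rfl fun i hi => ?_
    simp only [mem_Icc] at hi
    rw [show N - (N - i) = i by omega]
  have hre3 : ∑ j ∈ Finset.Icc 1 (N - 3), (p (N - j) : ℚ)
      = ∑ i ∈ Finset.Icc 3 (N - 1), (p i : ℚ) := by
    rw [reindex_aux N (N - 3) (by omega) (by omega), show N - (N - 3) = 3 by omega]
    refine Finset.sum_congr rfl fun i hi => ?_
    simp only [mem_Icc] at hi
    rw [show N - (N - i) = i by omega]
  -- D (N-2) ≤ 0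
  have h2' : (p 1 : ℚ) ≤ ∑ i ∈ Finset.Icc 2 (N - 1), ((N : ℚ) - i) * p i := by
    exact_mod_cast h2
  have hDN2 : D (N - 2) ≤ 0 := by
    simp only [hD]
    rw [hre2]
    have hSle : S ≤ (N : ℚ) * ∑ i ∈ Finset.Icc 2 (N - 1), (p i : ℚ) := by
      rw [hS, hsplit1, Finset.sum_insert h1notin, Finset.mul_sum]
      have : ∑ i ∈ Finset.Icc 2 (N - 1), (i : ℚ) * p i
            + ∑ i ∈ Finset.Icc 2 (N - 1), ((N:ℚ) - i) * p i
          = ∑ i ∈ Finset.Icc 2 (N - 1), (N : ℚ) * p i := by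
        rw [← Finset.sum_add_distrib]; exact Finset.sum_congr rfl fun i _ => by ring
      push_cast
      linarith
    have : S / N ≤ ∑ i ∈ Finset.Icc 2 (N - 1), (p i : ℚ) := by
      rw [div_le_iff₀ (by positivity : (0:ℚ) < N)]; linarith [hSle]
    linarith
  -- 0 ≤ D (N-3)
  have h3' : (∑ i ∈ Finset.Icc 3 (N - 1), ((N : ℚ) - i) * p i) ≤ (p 1 : ℚ) + 2 * p 2 := by
    have : (∑ i ∈ Finset.Icc 3 (N - 1), ((N : ℤ) - i) * p i) ≤ (p 1 : ℤ) + 2 * p 2 := by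
      linarith
    exact_mod_cast this
  have hDN3 : 0 ≤ D (N - 3) := by
    simp only [hD]
    rw [hre3]
    have hSge : (N : ℚ) * ∑ i ∈ Finset.Icc 3 (N - 1), (p i : ℚ) ≤ S := by
      rw [hS, hsplit2, Finset.sum_insert h1notin2, Finset.sum_insert h2notin, Finset.mul_sum]
      have : ∑ i ∈ Finset.Icc 3 (N - 1), (i : ℚ) * p i
            + ∑ i ∈ Finset.Icc 3 (N - 1), ((N:ℚ) - i) * p i
          = ∑ i ∈ Finset.Icc 3 (N - 1), (N : ℚ) * p i := by
        rw [← Finset.sum_add_distrib]; exact Finset.sum_congr rfl fun i _ => by ring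
      push_cast
      linarith
    have : ∑ i ∈ Finset.Icc 3 (N - 1), (p i : ℚ) ≤ S / N := by
      rw [le_div_iff₀ (by positivity : (0:ℚ) < N)]; linarith
    linarith
  -- monotone up to N - 2
  have hmono : ∀ b : ℕ, b ≤ N - 2 → ∀ a : ℕ, a ≤ b → k a ≤ k b := by
    intro b
    induction b with
    | zero => intro _ a ha; interval_cases a; rfl
    | succ b ih =>
      intro hb a ha
      rcases Nat.eq_or_lt_of_le ha with h | h
      · rw [h]
      · have hab : a ≤ b := by omega
        have h1 : k a ≤ k b := ih (by omega) a hab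
        have h2 : 0 ≤ D b := le_trans hDN3 (hDanti b (N - 3) (by omega))
        have := hstep b
        linarith
  intro n hn
  simp only [mem_Icc] at hn
  rcases Nat.lt_or_ge n (N - 1) with h | h
  · exact hmono (N - 2) le_rfl n (by omega)
  · have hn2 : n = N - 1 := by omega
    have : N - 1 = (N - 2) + 1 := by omega
    rw [hn2, this, hstep (N - 2)]
    linarith
end
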